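/- Let μ > 0 and x ≥ 0. Then e^{−x}·∫₀^{x} u^{μ−1}·e^{u} du = Σ_{k=0}^{∞} (−1)^k · x^{μ+k} / ( μ·(μ+1)·(μ+2)⋯(μ+k) ), where the series on the right converges absolutely. -/

import Mathlib

open Finset Nat MeasureTheory

lemma key_ident : ∀ (N : ℕ) (μ : ℝ), 0 < μ →
    ∑ n ∈ range (N+1), (-1:ℝ)^n * (N.choose n) / (μ + n)
      = (N ! : ℝ) / ∏ i ∈ range (N+1), (μ + i) := by
  intro N
  induction N with
  | zero => intro μ hμ; simp
  | succ N ih =>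
    intro μ hμ
    have hμ1 : (0:ℝ) < μ + 1 := by linarith
    have hA : (0:ℝ) < ∏ i ∈ range N, (μ + 1 + i) := by
      apply Finset.prod_pos; intro i _; positivity
    have h1 : ∑ n ∈ range (N+2), (-1:ℝ)^n * ((N+1).choose n) / (μ + n)
        = (∑ n ∈ range (N+1), (-1:ℝ)^n * (N.choose n) / (μ + n))
          - ∑ n ∈ range (N+1), (-1:ℝ)^n * (N.choose n) / ((μ+1) + n) := by
      rw [Finset.sum_range_succ' (fun n => (-1:ℝ)^n * ((N+1).choose n) / (μ + n)) (N+1)]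
      have e1 : ∀ m ∈ range (N+1),
          (-1:ℝ)^(m+1) * (((N+1).choose (m+1) : ℕ) : ℝ) / (μ + ((m+1 : ℕ) : ℝ))
            = -((-1:ℝ)^m * (N.choose m) / ((μ+1) + m))
              + -((-1:ℝ)^m * (N.choose (m+1)) / (μ + ((m+1:ℕ):ℝ))) := by
        intro m _
        rw [Nat.choose_succ_succ]
        have hd : μ + ((m+1:ℕ):ℝ) ≠ 0 := by push_cast; nlinarith [Nat.cast_nonneg (α := ℝ) m]
        field_simp
        push_cast
        ring
      rw [Finset.sum_congr rfl e1, Finset.sum_add_distrib]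
      have e2 : ∑ m ∈ range (N+1), -((-1:ℝ)^m * (N.choose (m+1)) / (μ + ((m+1:ℕ):ℝ)))
          = (∑ n ∈ range (N+1), (-1:ℝ)^n * (N.choose n) / (μ + n)) - 1/μ := by
        rw [Finset.sum_range_succ, Finset.sum_range_succ'
          (fun n => (-1:ℝ)^n * (N.choose n) / (μ + n)) N]
        simp [Nat.choose_succ_self]
        ring_nf
        rw [← Finset.sum_neg_distrib]
      rw [e2]
      have e3 : ∑ m ∈ range (N+1), -((-1:ℝ)^m * (N.choose m) / ((μ+1) + m))
          = -∑ n ∈ range (N+1), (-1:ℝ)^n * (N.choose n) / ((μ+1) + n) := by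
        rw [← Finset.sum_neg_distrib]
      rw [e3]
      simp
      ring
    rw [h1, ih μ hμ, ih (μ+1) hμ1]
    have p3 : ∏ i ∈ range (N+1), (μ + i) = μ * ∏ i ∈ range N, (μ + 1 + i) := by
      rw [Finset.prod_range_succ' (fun i => μ + (i:ℝ)) N]
      rw [show (∏ i ∈ range N, (μ + ((i+1:ℕ):ℝ))) = ∏ i ∈ range N, (μ + 1 + i) from
        Finset.prod_congr rfl fun i _ => by push_cast; ring]
      push_cast; ring
    have p2 : ∏ i ∈ range (N+1), ((μ+1) + i) = (∏ i ∈ range N, (μ + 1 + i)) * (μ + 1 + N) :=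
      Finset.prod_range_succ _ N
    have p1 : ∏ i ∈ range (N+2), (μ + i)
        = (μ * ∏ i ∈ range N, (μ + 1 + i)) * (μ + 1 + N) := by
      rw [Finset.prod_range_succ, p3]; push_cast; ring
    rw [p1, p2, p3]
    have hAne : (∏ i ∈ range N, (μ + 1 + i)) ≠ 0 := ne_of_gt hA
    have h2 : μ + 1 + (N:ℝ) ≠ 0 := by positivity
    rw [Nat.factorial_succ]
    field_simp
    push_cast
    ring

lemma cast_fact_prod (k : ℕ) : (k ! : ℝ) = ∏ i ∈ range k, ((i:ℝ) + 1) := by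
  induction k with
  | zero => simp
  | succ k ih => rw [Finset.prod_range_succ, ← ih, Nat.factorial_succ]; push_cast; ring

lemma prod_ge {μ : ℝ} (hμ : 0 < μ) (k : ℕ) :
    μ * k ! ≤ ∏ i ∈ range (k+1), (μ + i) := by
  have h1 : ∏ i ∈ range (k+1), (μ + i) = μ * ∏ i ∈ range k, (μ + 1 + i) := by
    rw [Finset.prod_range_succ' (fun i => μ + (i:ℝ)) k]
    rw [show (∏ i ∈ range k, (μ + ((i+1:ℕ):ℝ))) = ∏ i ∈ range k, (μ + 1 + i) from
      Finset.prod_congr rfl fun i _ => by push_cast; ring]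
    push_cast; ring
  rw [h1, cast_fact_prod]
  have h3 : ∏ i ∈ range k, ((i:ℝ)+1) ≤ ∏ i ∈ range k, (μ+1+i) :=
    Finset.prod_le_prod (fun i _ => by positivity) (fun i _ => by linarith)
  exact mul_le_mul_of_nonneg_left h3 hμ.le

lemma sumb {μ x : ℝ} (hμ : 0 < μ) (hx : 0 < x) :
    Summable (fun n : ℕ => x ^ (μ + n) / ((μ + n) * n !)) := by
  apply Summable.of_nonneg_of_le (f := fun n => (x ^ μ / μ) * (x ^ n / n !))
    (fun n => by positivity) (fun n => ?_)
    ((Real.summable_pow_div_factorial x).mul_left _)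
  beta_reduce
  rw [Real.rpow_add hx, Real.rpow_natCast,
    show x ^ μ / μ * (x ^ n / n !) = x ^ μ * x ^ n / (μ * n !) by ring]
  gcongr
  have : (0:ℝ) ≤ n := Nat.cast_nonneg n
  nlinarith [Nat.cast_pos (α := ℝ).mpr (Nat.factorial_pos n)]

lemma suma {μ x : ℝ} (hμ : 0 < μ) (hx : 0 < x) :
    Summable (fun k : ℕ =>
      |(-1 : ℝ) ^ k * x ^ (μ + k) / ∏ i ∈ Finset.range (k + 1), (μ + i)|) := by
  apply Summable.of_nonneg_of_le (f := fun n => (x ^ μ / μ) * (x ^ n / n !))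
    (fun n => abs_nonneg _) (fun k => ?_)
    ((Real.summable_pow_div_factorial x).mul_left _)
  have hP : (0:ℝ) < ∏ i ∈ range (k+1), (μ + i) := by
    apply Finset.prod_pos; intro i _; positivity
  beta_reduce
  rw [abs_div, abs_mul, abs_pow, abs_neg, abs_one, one_pow, one_mul,
    abs_of_nonneg (Real.rpow_nonneg hx.le _), abs_of_pos hP,
    Real.rpow_add hx, Real.rpow_natCast,
    show x ^ μ / μ * (x ^ k / k !) = x ^ μ * x ^ k / (μ * k !) by ring]
  gcongr
  exact prod_ge hμ k

lemma intb {μ x : ℝ} (hμ : 0 < μ) (hx : 0 < x) :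
    ∫ u in (0:ℝ)..x, u ^ (μ - 1) * Real.exp u
      = ∑' n : ℕ, x ^ (μ + n) / ((μ + n) * n !) := by
  have hxle : (0:ℝ) ≤ x := hx.le
  have hr : ∀ n : ℕ, (-1:ℝ) < μ - 1 + n := by
    intro n; have : (0:ℝ) ≤ n := Nat.cast_nonneg n; linarith
  have hFint : ∀ n : ℕ, IntegrableOn (fun u : ℝ => u ^ (μ-1+n) / n !) (Set.Ioc 0 x) := by
    intro n
    exact (intervalIntegrable_iff_integrableOn_Ioc_of_le hxle).mp
      ((intervalIntegral.intervalIntegrable_rpow' (hr n)).div_const _)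
  have hval : ∀ n : ℕ, ∫ u in Set.Ioc (0:ℝ) x, u ^ (μ-1+n) / n !
      = x ^ (μ + n) / ((μ + n) * n !) := by
    intro n
    rw [← intervalIntegral.integral_of_le hxle, intervalIntegral.integral_div,
      integral_rpow (Or.inl (hr n))]
    rw [show μ - 1 + n + 1 = μ + n by ring, Real.zero_rpow (ne_of_gt (by have : (0:ℝ) ≤ (n:ℝ) := Nat.cast_nonneg n; linarith))]
    field_simp
    exact sub_zero _
  have hnorm : ∀ n : ℕ, ∫ u in Set.Ioc (0:ℝ) x, ‖u ^ (μ-1+n) / (n ! : ℝ)‖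
      = x ^ (μ + n) / ((μ + n) * n !) := by
    intro n
    rw [← hval n]
    apply setIntegral_congr_fun measurableSet_Ioc
    intro u hu
    exact Real.norm_of_nonneg (div_nonneg (Real.rpow_nonneg hu.1.le _) (by positivity))
  rw [intervalIntegral.integral_of_le hxle]
  have hcongr : ∫ u in Set.Ioc (0:ℝ) x, u ^ (μ-1) * Real.exp u
      = ∫ u in Set.Ioc (0:ℝ) x, ∑' n : ℕ, u ^ (μ-1+n) / n ! := by
    apply setIntegral_congr_fun measurableSet_Ioc
    intro u hu
    have hu0 : (0:ℝ) < u := hu.1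
    simp only [Real.exp_eq_exp_ℝ, NormedSpace.exp_eq_tsum_div]
    rw [← tsum_mul_left]
    apply tsum_congr
    intro n
    rw [Real.rpow_add hu0, Real.rpow_natCast]
    ring
  rw [hcongr, ← MeasureTheory.integral_tsum_of_summable_integral_norm hFint
    (by simp_rw [hnorm]; exact sumb hμ hx)]
  exact tsum_congr hval

lemma term_eq {μ x : ℝ} (hμ : 0 < μ) (hx : 0 < x) {n N : ℕ} (hn : n ≤ N) :
    ((-x) ^ (N-n) / (N-n)!) * (x ^ (μ + n) / ((μ + n) * n !))
      = ((-1:ℝ)^N * x ^ (μ + N) / N !) * ((-1:ℝ)^n * (N.choose n) / (μ + n)) := by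
  obtain ⟨j, rfl⟩ := Nat.le.dest hn
  rw [Nat.add_sub_cancel_left]
  have hc : ((n+j).choose n : ℝ) * n ! * j ! = ((n+j)! : ℝ) := by
    have h := Nat.choose_mul_factorial_mul_factorial (Nat.le_add_right n j)
    rw [Nat.add_sub_cancel_left] at h
    exact_mod_cast h
  have hxp : x ^ (μ + ((n:ℝ) + (j:ℝ))) = x ^ (μ + n) * x ^ (j:ℝ) := by
    rw [← Real.rpow_add hx, ← add_assoc]
  have h1 : ((-1:ℝ))^n * (-1)^n = 1 := by rw [← mul_pow]; norm_num
  have hfn : ((n !:ℕ):ℝ) ≠ 0 := by positivity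
  have hfj : ((j !:ℕ):ℝ) ≠ 0 := by positivity
  have hfnj : (((n+j)!:ℕ):ℝ) ≠ 0 := by positivity
  have hμn : μ + (n:ℝ) ≠ 0 := by positivity
  push_cast
  rw [hxp]
  rw [show ((-x):ℝ)^j = (-1:ℝ)^j * x^j by rw [neg_pow],
    Real.rpow_natCast, pow_add]
  field_simp
  linear_combination (-(((n+j).choose n : ℝ) * (n ! : ℝ) * (j ! : ℝ))) * h1 - hc

lemma cauchy {μ x : ℝ} (hμ : 0 < μ) (hx : 0 < x) :
    Real.exp (-x) * ∑' n : ℕ, x ^ (μ + n) / ((μ + n) * n !)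
      = ∑' k : ℕ, (-1:ℝ)^k * x ^ (μ + k) / ∏ i ∈ range (k+1), (μ + i) := by
  have hf : Summable fun m : ℕ => ‖(-x)^m / (m ! : ℝ)‖ := by
    refine (Real.summable_pow_div_factorial x).congr fun m => ?_
    rw [norm_div, norm_pow, norm_neg, Real.norm_of_nonneg hx.le,
      Real.norm_of_nonneg (by positivity : (0:ℝ) ≤ (m ! : ℝ))]
  have hg : Summable fun n : ℕ => ‖x ^ (μ + n) / ((μ + n) * n !)‖ := by
    refine (sumb hμ hx).congr fun n => ?_
    rw [Real.norm_of_nonneg]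
    apply div_nonneg (Real.rpow_nonneg hx.le _)
    have : (0:ℝ) ≤ n := Nat.cast_nonneg n
    positivity
  have he : Real.exp (-x) = ∑' m : ℕ, (-x)^m / (m ! : ℝ) := by
    rw [Real.exp_eq_exp_ℝ]; exact congrFun NormedSpace.exp_eq_tsum_div (-x)
  rw [he, tsum_mul_tsum_eq_tsum_sum_antidiagonal_of_summable_norm hf hg]
  apply tsum_congr
  intro N
  rw [Finset.Nat.sum_antidiagonal_eq_sum_range_succ_mk, ← Finset.sum_range_reflect]
  simp only [Nat.succ_sub_one]
  have hterm : ∀ j ∈ range (N+1),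
      ((-x)^(N-j) / ((N-j)! : ℝ))
          * (x ^ (μ + ((N-(N-j) : ℕ) : ℝ)) / ((μ + ((N-(N-j) : ℕ) : ℝ)) * ((N-(N-j))! : ℝ)))
        = ((-1:ℝ)^N * x ^ (μ + N) / (N ! : ℝ)) * ((-1:ℝ)^j * (N.choose j) / (μ + j)) := by
    intro j hj
    have hj' : j ≤ N := by
      have := Finset.mem_range.mp hj; omega
    rw [Nat.sub_sub_self hj']
    exact term_eq hμ hx hj'
  rw [Finset.sum_congr rfl hterm, ← Finset.mul_sum, key_ident N μ hμ]
  have hP : (0:ℝ) < ∏ i ∈ range (N+1), (μ + i) := by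
    apply Finset.prod_pos; intro i _; positivity
  have hN : ((N ! : ℕ) : ℝ) ≠ 0 := by positivity
  field_simp

/-- for `μ > 0` and `x ≥ 0`,
`e^{−x}∫₀^x u^{μ−1}e^u du = Σ_{k=0}^∞ (−1)^k x^{μ+k} / (μ(μ+1)⋯(μ+k))`,
the series converging absolutely. -/
theorem stmt13 {μ : ℝ} (hμ : 0 < μ) (x : ℝ) (hx : 0 ≤ x) :
    Summable (fun k : ℕ =>
      |(-1 : ℝ) ^ k * x ^ (μ + k) / ∏ i ∈ Finset.range (k + 1), (μ + i)|) ∧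
    Real.exp (-x) * ∫ u in (0:ℝ)..x, u ^ (μ - 1) * Real.exp u
      = ∑' k : ℕ, (-1 : ℝ) ^ k * x ^ (μ + k) / ∏ i ∈ Finset.range (k + 1), (μ + i) := by
  rcases eq_or_lt_of_le hx with h | h
  · subst h
    have hz : ∀ k : ℕ, (-1 : ℝ) ^ k * (0:ℝ) ^ (μ + k) / ∏ i ∈ range (k + 1), (μ + i) = 0 := by
      intro k
      rw [Real.zero_rpow (ne_of_gt (by have : (0:ℝ) ≤ (k:ℝ) := Nat.cast_nonneg k; linarith))]
      simp
    constructor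
    · exact summable_zero.congr fun k => by rw [hz k]; simp
    · rw [intervalIntegral.integral_same, tsum_congr hz]
      simp
  · exact ⟨suma hμ h, by rw [intb hμ h, cauchy hμ h]⟩
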